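/- Let N ≥ 1 and let z ∈ ℍ with y = Im(z). Then for every complex s with Re(s) > 1, ∑_{d | N} μ(d) · d^{-s} · E_∞(Nz/d, s) = N^s · ζ_N(2s) · ∑_{(m,n) ∈ ℤ², gcd(mN, n) = 1} y^s / |mNz + n|^{2s}, where μ is the Möbius function and the sum on the right converges absolutely. -/

import Mathlib

noncomputable section
open Complex Real MeasureTheory UpperHalfPlane Filter Topology
open scoped UpperHalfPlane

/-- The Epstein zeta function (real-analytic Eisenstein series)
`E_∞(w,s) = ∑_{(m,n) ∈ ℤ²∖{0}} (Im w)^s / |mw+n|^{2s}`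
(defined for any `w : ℂ`, intended for `Im w > 0` and `Re s > 1`). -/
def Eis (w : ℂ) (s : ℂ) : ℂ :=
  ∑' p : {p : ℤ × ℤ // p ≠ 0},
    (w.im : ℂ) ^ s / (((‖((p : ℤ × ℤ).1 : ℂ) * w + ((p : ℤ × ℤ).2 : ℂ)‖ : ℝ) : ℂ)) ^ (2 * s)

/-- `ζ_N(s) = ∑_{n ≥ 1, gcd(n,N) = 1} n^{-s}`. -/
def zetaN (N : ℕ) (s : ℂ) : ℂ :=
  ∑' n : {n : ℕ // 0 < n ∧ Nat.Coprime n N}, (((n : ℕ) : ℂ)) ^ (-s)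

namespace Stmt3Aux

lemma lin_ne_zero (w : ℍ) {p : ℤ × ℤ} (hp : p ≠ 0) :
    ((p.1:ℂ) * (w:ℂ) + (p.2:ℂ)) ≠ 0 := by
  have h := UpperHalfPlane.linear_ne_zero (cd := ![(p.1:ℝ), (p.2:ℝ)]) w ?_
  · simpa using h
  · intro h0
    apply hp
    have h1 : ((p.1:ℝ)) = 0 := congrFun h0 0
    have h2 : ((p.2:ℝ)) = 0 := congrFun h0 1
    exact Prod.ext (by exact_mod_cast h1) (by exact_mod_cast h2)

lemma summable_rpow_aux (w : ℍ) {c : ℝ} (hc : 2 < c) :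
    Summable fun p : ℤ × ℤ => ‖(p.1:ℂ) * (w:ℂ) + (p.2:ℂ)‖ ^ (-c) := by
  have h0 : (0:ℝ) ≤ c := by linarith
  have hbase : Summable fun p : ℤ × ℤ => ‖(finTwoArrowEquiv ℤ).symm p‖ ^ (-c) :=
    ((finTwoArrowEquiv ℤ).symm.summable_iff).mpr (EisensteinSeries.summable_one_div_norm_rpow hc)
  apply Summable.of_nonneg_of_le (fun p => Real.rpow_nonneg (norm_nonneg _) _)
    (fun p => ?_) (hbase.mul_left (EisensteinSeries.r w ^ (-c)))
  have := EisensteinSeries.summand_bound w h0 ((finTwoArrowEquiv ℤ).symm p)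
  simpa [finTwoArrowEquiv] using this

lemma norm_term (w : ℍ) {a : ℝ} (ha : 0 < a) {s : ℂ} (hs : 1 < s.re) (p : ℤ × ℤ) :
    ‖(a:ℂ) ^ s / ((‖(p.1:ℂ) * (w:ℂ) + (p.2:ℂ)‖ : ℝ):ℂ) ^ (2*s)‖
      = a ^ s.re * ‖(p.1:ℂ) * (w:ℂ) + (p.2:ℂ)‖ ^ (-(2*s.re)) := by
  have h2s : (2*s) ≠ 0 := by
    intro h; have := congrArg Complex.re h; simp at this; nlinarith
  by_cases hp : p = 0
  · subst hp
    simp only [Prod.fst_zero, Prod.snd_zero, Int.cast_zero, zero_mul, add_zero, map_zero,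
      Complex.ofReal_zero, Complex.zero_cpow h2s, div_zero, norm_zero]
    rw [Real.zero_rpow (by intro h; nlinarith [neg_eq_zero.mp h] : -(2*s.re) ≠ 0), mul_zero]
  · have hA : 0 < ‖(p.1:ℂ) * (w:ℂ) + (p.2:ℂ)‖ := by
      exact norm_pos_iff.mpr (lin_ne_zero w hp)
    rw [norm_div,
      Complex.norm_cpow_eq_rpow_re_of_pos ha, Complex.norm_cpow_eq_rpow_re_of_pos hA,
      Real.rpow_neg (norm_nonneg _), div_eq_mul_inv]
    congr 2
    simp

lemma summable_norm (w : ℍ) {a : ℝ} (ha : 0 < a) {s : ℂ} (hs : 1 < s.re) :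
    Summable fun p : ℤ × ℤ =>
      ‖(a:ℂ) ^ s / ((‖(p.1:ℂ) * (w:ℂ) + (p.2:ℂ)‖ : ℝ):ℂ) ^ (2*s)‖ := by
  have hc : (2:ℝ) < 2*s.re := by linarith
  have := (summable_rpow_aux w hc).mul_left (a ^ s.re)
  exact this.congr fun p => (norm_term w ha hs p).symm


def Gterm (N : ℕ) (z : ℍ) (s : ℂ) (q : ℤ × ℤ) : ℂ :=
  ((z.im : ℝ):ℂ)^s / ((‖(q.1:ℂ)*(N:ℂ)*(z:ℂ) + (q.2:ℂ)‖ : ℝ):ℂ)^(2*s)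

lemma ofReal_div_cpow {a b : ℝ} (ha : 0 ≤ a) (hb : 0 < b) (s : ℂ) :
    (((a/b : ℝ)):ℂ) ^ s = (a:ℂ)^s * ((b:ℂ)^s)⁻¹ := by
  rw [div_eq_mul_inv, Complex.ofReal_mul, Complex.mul_cpow_ofReal_nonneg ha (inv_nonneg.mpr hb.le),
    Complex.ofReal_inv, Complex.inv_cpow]
  rw [Complex.arg_ofReal_of_nonneg hb.le]
  exact Real.pi_ne_zero.symm

lemma two_s_ne {s : ℂ} (hs : 1 < s.re) : (2*s) ≠ 0 := by
  intro h; have := congrArg Complex.re h; simp at this; nlinarith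

lemma s_ne {s : ℂ} (hs : 1 < s.re) : s ≠ 0 := by
  intro h; rw [h] at hs; simp at hs; linarith


lemma term_eq (N d : ℕ) (hd0 : 0 < d) (z : ℍ) {s : ℂ} (hs : 1 < s.re) (p : ℤ × ℤ) :
    (d:ℂ)^(-s) * ((((N:ℂ)*(z:ℂ)/(d:ℂ)).im : ℂ)^s /
        ((‖(p.1:ℂ) * ((N:ℂ)*(z:ℂ)/(d:ℂ)) + (p.2:ℂ)‖ : ℝ):ℂ)^(2*s))
      = (N:ℂ)^s * Gterm N z s (p.1, (d:ℤ) * p.2) := by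
  have hdC : (d:ℂ) ≠ 0 := Nat.cast_ne_zero.mpr hd0.ne'
  have hdR : (0:ℝ) < (d:ℝ) := Nat.cast_pos.mpr hd0
  have him : ((N:ℂ)*(z:ℂ)/(d:ℂ)).im = (N:ℝ)*z.im/(d:ℝ) := by
    rw [show (N:ℂ)*(z:ℂ)/(d:ℂ) = ((((N:ℝ)/(d:ℝ)):ℝ):ℂ)*(z:ℂ) by push_cast; ring,
      Complex.im_ofReal_mul]
    simp only [UpperHalfPlane.coe_im]
    ring
  have harg : (p.1:ℂ) * ((N:ℂ)*(z:ℂ)/(d:ℂ)) + (p.2:ℂ)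
      = ((p.1:ℂ)*(N:ℂ)*(z:ℂ) + (((d:ℤ)*p.2 : ℤ):ℂ)) / (d:ℂ) := by
    push_cast; field_simp
  set A : ℝ := ‖(p.1:ℂ)*(N:ℂ)*(z:ℂ) + (((d:ℤ)*p.2 : ℤ):ℂ)‖ with hA
  have habs : ‖(p.1:ℂ) * ((N:ℂ)*(z:ℂ)/(d:ℂ)) + (p.2:ℂ)‖ = A / (d:ℝ) := by
    rw [harg, norm_div, Complex.norm_natCast]
  rw [him, habs, ofReal_div_cpow (norm_nonneg _) hdR,
    ofReal_div_cpow (by positivity) hdR, Complex.ofReal_mul,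
    Complex.mul_cpow_ofReal_nonneg (Nat.cast_nonneg N) z.im_pos.le]
  have hds : (d:ℂ)^s ≠ 0 := by
    simp [Complex.cpow_eq_zero_iff, hdC]
  have h2 : ((d:ℝ):ℂ)^(2*s) = (d:ℂ)^s * (d:ℂ)^s := by
    rw [two_mul, Complex.cpow_add _ _ (by push_cast; exact hdC)]
    norm_cast
  rw [h2, Complex.cpow_neg]
  have hcast : ((d:ℝ):ℂ)^s = (d:ℂ)^s := by norm_cast
  have hcastN : ((N:ℝ):ℂ) = (N:ℂ) := by norm_cast
  rw [hcast, hcastN, Gterm]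
  by_cases hA2 : ((A:ℝ):ℂ)^(2*s) = 0
  · rw [hA2]
    simp
  · field_simp [hds, hA2]

lemma Gterm_zero (N : ℕ) (z : ℍ) {s : ℂ} (hs : 1 < s.re) : Gterm N z s 0 = 0 := by
  simp [Gterm, Complex.zero_cpow (two_s_ne hs)]

lemma eis_eq (N d : ℕ) (hd0 : 0 < d) (z : ℍ) {s : ℂ} (hs : 1 < s.re) :
    (d:ℂ)^(-s) * Eis ((N:ℂ)*(z:ℂ)/(d:ℂ)) s
      = (N:ℂ)^s * ∑' q : ℤ × ℤ, (if (d:ℤ) ∣ q.2 then Gterm N z s q else 0) := by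
  have hdz : (d:ℤ) ≠ 0 := Int.natCast_ne_zero.mpr hd0.ne'
  calc (d:ℂ)^(-s) * Eis ((N:ℂ)*(z:ℂ)/(d:ℂ)) s
      = ∑' p : {p : ℤ × ℤ // p ≠ 0},
          (N:ℂ)^s * Gterm N z s ((p : ℤ × ℤ).1, (d:ℤ)*(p : ℤ × ℤ).2) := by
        rw [Eis, ← tsum_mul_left]
        exact tsum_congr fun p => term_eq N d hd0 z hs p
    _ = ∑' p : ℤ × ℤ, (N:ℂ)^s * Gterm N z s (p.1, (d:ℤ)*p.2) := by
        apply Function.Injective.tsum_eq Subtype.val_injective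
          (f := fun p : ℤ × ℤ => (N:ℂ)^s * Gterm N z s (p.1, (d:ℤ)*p.2))
        intro x hx
        rw [Subtype.range_coe_subtype]
        by_contra h
        simp only [Set.mem_setOf_eq, not_not] at h
        apply hx
        subst h
        simp only [Prod.fst_zero, Prod.snd_zero, mul_zero]
        rw [show ((0:ℤ), (0:ℤ)) = (0 : ℤ×ℤ) from rfl, Gterm_zero N z hs, mul_zero]
    _ = ∑' q : ℤ × ℤ, (N:ℂ)^s * (if (d:ℤ) ∣ q.2 then Gterm N z s q else 0) := by
        have hinj : Function.Injective (fun p : ℤ×ℤ => (p.1, (d:ℤ)*p.2)) := by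
          intro a b hab
          simp only [Prod.mk.injEq] at hab
          exact Prod.ext hab.1 (mul_left_cancel₀ hdz hab.2)
        have hsupp : Function.support
            (fun q : ℤ×ℤ => (N:ℂ)^s * (if (d:ℤ) ∣ q.2 then Gterm N z s q else 0))
            ⊆ Set.range (fun p : ℤ×ℤ => (p.1, (d:ℤ)*p.2)) := by
          intro x hx
          rcases em ((d:ℤ) ∣ x.2) with ⟨k, hk⟩ | h
          · exact ⟨(x.1, k), Prod.ext rfl hk.symm⟩
          · exfalso
            apply hx
            simp [h]
        have heq := Function.Injective.tsum_eq hinj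
          (f := fun q : ℤ×ℤ => (N:ℂ)^s * (if (d:ℤ) ∣ q.2 then Gterm N z s q else 0)) hsupp
        rw [← heq]
        exact tsum_congr fun p => by
          simp [dvd_mul_right]
    _ = (N:ℂ)^s * ∑' q : ℤ × ℤ, (if (d:ℤ) ∣ q.2 then Gterm N z s q else 0) := tsum_mul_left

lemma moebius_step (N : ℕ) (hN : 0 < N) (k : ℤ) (c : ℂ) :
    ∑ d ∈ N.divisors, ((ArithmeticFunction.moebius d : ℤ):ℂ) * (if (d:ℤ) ∣ k then c else 0)
      = (if Int.gcd (N:ℤ) k = 1 then c else 0) := by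
  have hstep : ∀ d ∈ N.divisors, ((ArithmeticFunction.moebius d : ℤ):ℂ) *
      (if (d:ℤ) ∣ k then c else 0)
      = (if (d:ℤ) ∣ k then ((ArithmeticFunction.moebius d : ℤ):ℂ) * c else 0) := by
    intro d _
    rw [mul_ite, mul_zero]
  rw [Finset.sum_congr rfl hstep, Finset.sum_ite, Finset.sum_const_zero, add_zero,
    ← Finset.sum_mul]
  have hset : N.divisors.filter (fun d : ℕ => ((d:ℤ) ∣ k)) = (Nat.gcd N k.natAbs).divisors := by
    ext a
    simp only [Finset.mem_filter, Nat.mem_divisors, Int.natCast_dvd, Nat.dvd_gcd_iff]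
    constructor
    · rintro ⟨⟨h1, h2⟩, h3⟩
      exact ⟨⟨h1, h3⟩, by
        simp only [ne_eq, Nat.gcd_eq_zero_iff, not_and_or]
        exact Or.inl h2⟩
    · rintro ⟨⟨h1, h3⟩, _⟩
      exact ⟨⟨h1, hN.ne'⟩, h3⟩
  rw [hset]
  have hsum : ∑ d ∈ (Nat.gcd N k.natAbs).divisors, ((ArithmeticFunction.moebius d : ℤ):ℂ)
      = (((ArithmeticFunction.moebius * ArithmeticFunction.zeta : ArithmeticFunction ℤ)
          (Nat.gcd N k.natAbs) : ℤ) : ℂ) := by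
    rw [ArithmeticFunction.coe_mul_zeta_apply]
    push_cast
    rfl
  rw [hsum, ArithmeticFunction.moebius_mul_coe_zeta]
  have hgcd : Int.gcd (N:ℤ) k = Nat.gcd N k.natAbs := by
    simp [Int.gcd]
  rw [ArithmeticFunction.one_apply, hgcd]
  by_cases h : Nat.gcd N k.natAbs = 1 <;> simp [h]

def mkN (N : ℕ) (hN : 0 < N) (z : ℍ) : ℍ :=
  ⟨(N:ℂ)*(z:ℂ), by
    rw [← Complex.ofReal_natCast, Complex.im_ofReal_mul]
    have := z.im_pos
    have hN' : (0:ℝ) < (N:ℝ) := Nat.cast_pos.mpr hN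
    rw [UpperHalfPlane.coe_im]
    positivity⟩

lemma summable_G (N : ℕ) (hN : 0 < N) (z : ℍ) {s : ℂ} (hs : 1 < s.re) :
    Summable fun q : ℤ × ℤ => ‖Gterm N z s q‖ := by
  have h := summable_norm (mkN N hN z) z.im_pos hs
  refine h.congr fun q => ?_
  have hco : ((mkN N hN z : ℍ) : ℂ) = (N:ℂ)*(z:ℂ) := rfl
  rw [Gterm, hco, ← mul_assoc]

lemma gcd_fact {m n : ℤ} (N : ℕ) (h : Int.gcd (m * (N:ℤ)) n = 1) :
    IsCoprime m n ∧ IsCoprime ((N:ℤ)) n := by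
  have := Int.isCoprime_iff_gcd_eq_one.mpr h
  exact ⟨IsCoprime.of_mul_left_left this, IsCoprime.of_mul_left_right this⟩

lemma Phi_image (N : ℕ) (hN : 0 < N) (z : ℍ) {s : ℂ} (hs : 1 < s.re)
    (x : {n : ℕ // 0 < n ∧ Nat.Coprime n N} × {p : ℤ × ℤ // Int.gcd (p.1 * (N:ℤ)) p.2 = 1}) :
    (if Int.gcd (N:ℤ) ((x.1.1:ℤ) * x.2.1.2) = 1
        then Gterm N z s ((x.1.1:ℤ) * x.2.1.1, (x.1.1:ℤ) * x.2.1.2) else 0)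
      = ((x.1.1:ℕ):ℂ)^(-(2*s)) * Gterm N z s x.2.1 := by
  obtain ⟨⟨g, hg0, hgN⟩, ⟨⟨m, n⟩, hmn⟩⟩ := x
  simp only []
  have hfacts := gcd_fact N hmn
  have hNg : IsCoprime ((N:ℤ)) ((g:ℤ)) := by
    rw [Int.isCoprime_iff_gcd_eq_one, Int.gcd_natCast_natCast]
    exact (Nat.coprime_comm.mp hgN)
  have hcond : Int.gcd (N:ℤ) ((g:ℤ) * n) = 1 :=
    Int.isCoprime_iff_gcd_eq_one.mp (IsCoprime.mul_right hNg hfacts.2)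
  rw [if_pos hcond]
  -- now compute Gterm of scaled point
  have habs : ‖(((g:ℤ) * m : ℤ):ℂ)*(N:ℂ)*(z:ℂ) + (((g:ℤ) * n : ℤ):ℂ)‖
      = (g:ℝ) * ‖(m:ℂ)*(N:ℂ)*(z:ℂ) + (n:ℂ)‖ := by
    rw [show (((g:ℤ) * m : ℤ):ℂ)*(N:ℂ)*(z:ℂ) + (((g:ℤ) * n : ℤ):ℂ)
        = ((g:ℝ):ℂ) * ((m:ℂ)*(N:ℂ)*(z:ℂ) + (n:ℂ)) by push_cast; ring, norm_mul]
    simp [abs_of_nonneg (Nat.cast_nonneg (α := ℝ) g)]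
  rw [Gterm, Gterm, habs, Complex.ofReal_mul,
    Complex.mul_cpow_ofReal_nonneg (Nat.cast_nonneg g) (norm_nonneg _),
    Complex.cpow_neg]
  rw [div_mul_eq_div_div_swap, div_eq_inv_mul]
  norm_cast

lemma Phi_inj (N : ℕ) :
    Function.Injective (fun x : {n : ℕ // 0 < n ∧ Nat.Coprime n N} ×
        {p : ℤ × ℤ // Int.gcd (p.1 * (N:ℤ)) p.2 = 1} =>
      ((x.1.1:ℤ) * x.2.1.1, (x.1.1:ℤ) * x.2.1.2)) := by
  rintro ⟨⟨g, hg0, hgN⟩, ⟨⟨m, n⟩, hmn⟩⟩ ⟨⟨g', hg0', hgN'⟩, ⟨⟨m', n'⟩, hmn'⟩⟩ h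
  simp only [Prod.mk.injEq] at h
  have hco : Int.gcd m n = 1 := by
    have h1 := (gcd_fact N hmn).1
    exact Int.isCoprime_iff_gcd_eq_one.mp h1
  have hco' : Int.gcd m' n' = 1 := by
    have h1 := (gcd_fact N hmn').1
    exact Int.isCoprime_iff_gcd_eq_one.mp h1
  have hgg : g = g' := by
    have e1 : Int.gcd ((g:ℤ)*m) ((g:ℤ)*n) = g * Int.gcd m n := by
      rw [Int.gcd_mul_left]
      simp
    have e2 : Int.gcd ((g':ℤ)*m') ((g':ℤ)*n') = g' * Int.gcd m' n' := by
      rw [Int.gcd_mul_left]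
      simp
    have heq : Int.gcd ((g:ℤ)*m) ((g:ℤ)*n) = Int.gcd ((g':ℤ)*m') ((g':ℤ)*n') := by
      rw [h.1, h.2]
    rw [e1, e2, hco, hco', mul_one, mul_one] at heq
    exact heq
  subst hgg
  have hgz : (g:ℤ) ≠ 0 := Int.natCast_ne_zero.mpr hg0.ne'
  have hm : m = m' := mul_left_cancel₀ hgz h.1
  have hn : n = n' := mul_left_cancel₀ hgz h.2
  subst hm; subst hn
  rfl

lemma Phi_surj (N : ℕ) (hN : 0 < N) (z : ℍ) {s : ℂ} (hs : 1 < s.re) :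
    Function.support (fun q : ℤ × ℤ => if Int.gcd (N:ℤ) q.2 = 1 then Gterm N z s q else 0)
      ⊆ Set.range (fun x : {n : ℕ // 0 < n ∧ Nat.Coprime n N} ×
          {p : ℤ × ℤ // Int.gcd (p.1 * (N:ℤ)) p.2 = 1} =>
        ((x.1.1:ℤ) * x.2.1.1, (x.1.1:ℤ) * x.2.1.2)) := by
  intro q hq
  have hcond : Int.gcd (N:ℤ) q.2 = 1 := by
    by_contra h
    apply hq
    simp [h]
  have hq0 : q ≠ 0 := by
    rintro rfl
    apply hq
    simp only [Function.mem_support] at *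
    rw [if_pos (by simpa using hcond), Gterm_zero N z hs]
  set g : ℕ := Int.gcd q.1 q.2 with hgdef
  have hg0 : 0 < g := by
    rw [hgdef, Int.gcd_pos_iff]
    by_contra h
    push_neg at h
    exact hq0 (Prod.ext h.1 h.2)
  have hgz : (g:ℤ) ≠ 0 := Int.natCast_ne_zero.mpr hg0.ne'
  have hdvd1 : (g:ℤ) ∣ q.1 := Int.gcd_dvd_left _ _
  have hdvd2 : (g:ℤ) ∣ q.2 := Int.gcd_dvd_right _ _
  set m : ℤ := q.1 / (g:ℤ) with hmdef
  set n : ℤ := q.2 / (g:ℤ) with hndef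
  have hm : q.1 = (g:ℤ) * m := (Int.mul_ediv_cancel' hdvd1).symm
  have hn : q.2 = (g:ℤ) * n := (Int.mul_ediv_cancel' hdvd2).symm
  have hco : Int.gcd m n = 1 := Int.gcd_div_gcd_div_gcd hg0
  -- N coprime to q.2 in Nat
  have hNq2 : IsCoprime ((N:ℤ)) q.2 := Int.isCoprime_iff_gcd_eq_one.mpr hcond
  have hNn : IsCoprime ((N:ℤ)) n := hNq2.of_isCoprime_of_dvd_right ⟨(g:ℤ), by rw [hn]; ring⟩
  have hmn : Int.gcd (m * (N:ℤ)) n = 1 := by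
    rw [← Int.isCoprime_iff_gcd_eq_one]
    exact IsCoprime.mul_left (Int.isCoprime_iff_gcd_eq_one.mpr hco) hNn
  have hgN : Nat.Coprime g N := by
    have h1 : g ∣ q.2.natAbs := by
      rw [hgdef]
      exact Nat.gcd_dvd_right _ _
    have h2 : Nat.Coprime q.2.natAbs N := by
      have : Nat.gcd N q.2.natAbs = 1 := by
        simpa [Int.gcd] using hcond
      exact Nat.coprime_comm.mp this
    exact Nat.Coprime.coprime_dvd_left h1 h2
  exact ⟨(⟨g, hg0, hgN⟩, ⟨(m, n), hmn⟩), (Prod.ext hm.symm hn.symm)⟩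

lemma summable_prod_fam (N : ℕ) (hN : 0 < N) (z : ℍ) {s : ℂ} (hs : 1 < s.re) :
    Summable (fun x : {n : ℕ // 0 < n ∧ Nat.Coprime n N} ×
        {p : ℤ × ℤ // Int.gcd (p.1 * (N:ℤ)) p.2 = 1} =>
      ((x.1.1:ℕ):ℂ)^(-(2*s)) * Gterm N z s x.2.1) := by
  apply Summable.of_norm
  have h1 : Summable (fun a : {n : ℕ // 0 < n ∧ Nat.Coprime n N} =>
      ((a.1:ℕ):ℝ) ^ (-(2*s.re))) := by
    have := Real.summable_nat_rpow.mpr (by linarith : -(2*s.re) < -1)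
    exact this.comp_injective Subtype.val_injective
  have h2 : Summable (fun b : {p : ℤ × ℤ // Int.gcd (p.1 * (N:ℤ)) p.2 = 1} =>
      ‖Gterm N z s b.1‖) :=
    (summable_G N hN z hs).comp_injective Subtype.val_injective
  have key := h1.mul_of_nonneg h2
    (fun a => Real.rpow_nonneg (Nat.cast_nonneg _) _) (fun b => norm_nonneg _)
  refine key.congr fun x => ?_
  rw [norm_mul]
  congr 1
  have hx0 : (0:ℝ) < ((x.1.1:ℕ):ℝ) := Nat.cast_pos.mpr x.1.2.1
  rw [show ((x.1.1:ℕ):ℂ) = (((x.1.1:ℕ):ℝ):ℂ) by norm_cast,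
    Complex.norm_cpow_eq_rpow_re_of_pos hx0]
  norm_num

lemma tsum_coprime_eq (N : ℕ) (hN : 0 < N) (z : ℍ) {s : ℂ} (hs : 1 < s.re) :
    ∑' q : ℤ × ℤ, (if Int.gcd (N:ℤ) q.2 = 1 then Gterm N z s q else 0)
      = (∑' n : {n : ℕ // 0 < n ∧ Nat.Coprime n N}, ((n:ℕ):ℂ)^(-(2*s))) *
        ∑' p : {p : ℤ × ℤ // Int.gcd (p.1 * (N:ℤ)) p.2 = 1}, Gterm N z s p.1 := by
  have heq := Function.Injective.tsum_eq (Phi_inj N)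
    (f := fun q : ℤ × ℤ => if Int.gcd (N:ℤ) q.2 = 1 then Gterm N z s q else 0)
    (Phi_surj N hN z hs)
  rw [← heq]
  have hcong : ∀ x : {n : ℕ // 0 < n ∧ Nat.Coprime n N} ×
      {p : ℤ × ℤ // Int.gcd (p.1 * (N:ℤ)) p.2 = 1},
      (if Int.gcd (N:ℤ) ((x.1.1:ℤ) * x.2.1.2) = 1
        then Gterm N z s ((x.1.1:ℤ) * x.2.1.1, (x.1.1:ℤ) * x.2.1.2) else 0)
      = ((x.1.1:ℕ):ℂ)^(-(2*s)) * Gterm N z s x.2.1 := fun x => Phi_image N hN z hs x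
  rw [tsum_congr hcong, Summable.tsum_prod (summable_prod_fam N hN z hs)]
  calc ∑' (b : {n : ℕ // 0 < n ∧ Nat.Coprime n N})
          (c : {p : ℤ × ℤ // Int.gcd (p.1 * (N:ℤ)) p.2 = 1}),
          ((b.1:ℕ):ℂ)^(-(2*s)) * Gterm N z s c.1
      = ∑' (b : {n : ℕ // 0 < n ∧ Nat.Coprime n N}),
          ((b.1:ℕ):ℂ)^(-(2*s)) * ∑' (c : {p : ℤ × ℤ // Int.gcd (p.1 * (N:ℤ)) p.2 = 1}),
            Gterm N z s c.1 := tsum_congr fun b => tsum_mul_left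
    _ = _ := tsum_mul_right

end Stmt3Aux

open Stmt3Aux

/-- for `N ≥ 1`, `z ∈ ℍ` with `y = Im z` and `Re s > 1`,
`∑_{d ∣ N} μ(d) d^{-s} E_∞(Nz/d, s) = N^s ζ_N(2s) ∑_{(m,n), gcd(mN,n)=1} y^s / |mNz+n|^{2s}`,
the sum on the right converging absolutely. -/
theorem stmt3 (N : ℕ) (hN : 1 ≤ N) (z : ℍ) (s : ℂ) (hs : 1 < s.re) :
    Summable (fun p : {p : ℤ × ℤ // Int.gcd (p.1 * (N : ℤ)) p.2 = 1} =>
      ‖((z.im : ℝ) : ℂ) ^ s /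
        (((‖((p : ℤ × ℤ).1 : ℂ) * (N : ℂ) * (z : ℂ) + ((p : ℤ × ℤ).2 : ℂ)‖ : ℝ) : ℂ)) ^ (2 * s)‖) ∧
    (∑ d ∈ N.divisors,
        ((ArithmeticFunction.moebius d : ℤ) : ℂ) * ((d : ℂ) ^ (-s)) * Eis ((N : ℂ) * (z : ℂ) / (d : ℂ)) s)
      = (N : ℂ) ^ s * zetaN N (2 * s) *
          ∑' p : {p : ℤ × ℤ // Int.gcd (p.1 * (N : ℤ)) p.2 = 1},
            ((z.im : ℝ) : ℂ) ^ s /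
              (((‖((p : ℤ × ℤ).1 : ℂ) * (N : ℂ) * (z : ℂ) + ((p : ℤ × ℤ).2 : ℂ)‖ : ℝ) : ℂ)) ^ (2 * s) := by
  have hN0 : 0 < N := hN
  constructor
  · exact (summable_G N hN0 z hs).comp_injective Subtype.val_injective
  · have hsummand : ∀ d : ℕ, Summable (fun q : ℤ × ℤ =>
        ((ArithmeticFunction.moebius d : ℤ):ℂ) * (if (d:ℤ) ∣ q.2 then Gterm N z s q else 0)) := by
      intro d
      apply Summable.of_norm_bounded
        (g := fun q => ‖((ArithmeticFunction.moebius d : ℤ):ℂ)‖ * ‖Gterm N z s q‖)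
        ((summable_G N hN0 z hs).mul_left _)
      intro q
      rw [norm_mul]
      apply mul_le_mul_of_nonneg_left _ (norm_nonneg _)
      by_cases h : (d:ℤ) ∣ q.2 <;> simp [h, norm_nonneg]
    calc (∑ d ∈ N.divisors,
          ((ArithmeticFunction.moebius d : ℤ):ℂ) * ((d:ℂ)^(-s)) * Eis ((N:ℂ)*(z:ℂ)/(d:ℂ)) s)
        = ∑ d ∈ N.divisors, (N:ℂ)^s * ∑' q : ℤ × ℤ,
            ((ArithmeticFunction.moebius d : ℤ):ℂ) * (if (d:ℤ) ∣ q.2 then Gterm N z s q else 0) := by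
          refine Finset.sum_congr rfl fun d hd => ?_
          have hd0 : 0 < d := Nat.pos_of_mem_divisors hd
          rw [mul_assoc, eis_eq N d hd0 z hs, mul_left_comm]
          congr 1
          exact (tsum_mul_left).symm
      _ = (N:ℂ)^s * ∑ d ∈ N.divisors, ∑' q : ℤ × ℤ,
            ((ArithmeticFunction.moebius d : ℤ):ℂ) * (if (d:ℤ) ∣ q.2 then Gterm N z s q else 0) := by
          rw [← Finset.mul_sum]
      _ = (N:ℂ)^s * ∑' q : ℤ × ℤ, ∑ d ∈ N.divisors,
            ((ArithmeticFunction.moebius d : ℤ):ℂ) * (if (d:ℤ) ∣ q.2 then Gterm N z s q else 0) := by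
          rw [Summable.tsum_finsetSum (fun d _ => hsummand d)]
      _ = (N:ℂ)^s * ∑' q : ℤ × ℤ, (if Int.gcd (N:ℤ) q.2 = 1 then Gterm N z s q else 0) := by
          congr 1
          exact tsum_congr fun q => moebius_step N hN0 q.2 (Gterm N z s q)
      _ = (N:ℂ)^s * ((∑' n : {n : ℕ // 0 < n ∧ Nat.Coprime n N}, ((n:ℕ):ℂ)^(-(2*s))) *
            ∑' p : {p : ℤ × ℤ // Int.gcd (p.1 * (N:ℤ)) p.2 = 1}, Gterm N z s p.1) := by
          rw [tsum_coprime_eq N hN0 z hs]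
      _ = (N:ℂ)^s * zetaN N (2*s) *
            ∑' p : {p : ℤ × ℤ // Int.gcd (p.1 * (N:ℤ)) p.2 = 1}, Gterm N z s p.1 := by
          rw [zetaN, mul_assoc]
      _ = _ := rfl
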